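/- Let H = ⊕_{n≥0} H_n be a graded connected Hopf algebra, f ∈ End(H_p), g ∈ End(H_q). The component of the smash product f # g in End(H_{p+q}) equals the convolution product f * g = m ∘ (f⊗g) ∘ Δ (restricted to H_{p+q}). -/
import Mathlib


open TensorProduct

/-- The cyclic map `(x ⊗ y) ⊗ z ↦ y ⊗ (z ⊗ x)`. -/
noncomputable def cyclicMap (k H : Type*) [CommSemiring k] [AddCommMonoid H] [Module k H] :
    (H ⊗[k] H) ⊗[k] H →ₗ[k] H ⊗[k] (H ⊗[k] H) :=
  (LinearMap.lTensor H (TensorProduct.comm k H H).toLinearMap) ∘ₗ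
    (TensorProduct.assoc k H H H).toLinearMap ∘ₗ
      (LinearMap.rTensor H (TensorProduct.comm k H H).toLinearMap)

/-- The smash product of linear endomorphisms, relative to a product `m` and coproduct `Δ`:
`f # g = m ∘ (1⊗g) ∘ (1⊗m) ∘ cyclic ∘ (Δ⊗1) ∘ (f⊗1) ∘ Δ`. -/
noncomputable def smashOf {k H : Type*} [CommSemiring k] [AddCommMonoid H] [Module k H]
    (m : H ⊗[k] H →ₗ[k] H) (Δ : H →ₗ[k] H ⊗[k] H) (f g : H →ₗ[k] H) : H →ₗ[k] H :=
  m ∘ₗ (LinearMap.lTensor H g) ∘ₗ (LinearMap.lTensor H m) ∘ₗ cyclicMap k H ∘ₗ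
    (LinearMap.rTensor H (Δ ∘ₗ f)) ∘ₗ Δ

/-- The smash product of endomorphisms of a Hopf algebra. -/
noncomputable def smashEnd (k H : Type*) [CommSemiring k] [Semiring H] [HopfAlgebra k H]
    (f g : H →ₗ[k] H) : H →ₗ[k] H :=
  smashOf (LinearMap.mul' k H) (Coalgebra.comul (R := k) (A := H)) f g

theorem cyclicMap_tmul (k H : Type*) [CommSemiring k] [AddCommMonoid H] [Module k H]
    (x y z : H) : cyclicMap k H ((x ⊗ₜ[k] y) ⊗ₜ[k] z) = y ⊗ₜ[k] (z ⊗ₜ[k] x) := by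
  simp [cyclicMap]

/-- for a graded connected Hopf algebra `H` and endomorphisms `f`, `g`
concentrated in degrees `p` and `q`, the component of `f # g` in `End(H_{p+q})` is the
convolution `f * g = m ∘ (f ⊗ g) ∘ Δ`. -/
theorem smash_top_component_eq_convolution (k H : Type*) [Field k] [Semiring H]
    [HopfAlgebra k H] (ℋ : ℕ → Submodule k H) [GradedAlgebra ℋ]
    (hconn : ℋ 0 = (1 : Submodule k H))
    (hcomul : ∀ (n : ℕ), ∀ x ∈ ℋ n,
      Coalgebra.comul (R := k) x ∈
        ⨆ pq : {pq : ℕ × ℕ // pq.1 + pq.2 = n},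
          LinearMap.range (TensorProduct.mapIncl (ℋ pq.1.1) (ℋ pq.1.2)))
    (p q : ℕ) (f g : H →ₗ[k] H)
    (hfp : ∀ x ∈ ℋ p, f x ∈ ℋ p) (hf0 : ∀ n, n ≠ p → ∀ x ∈ ℋ n, f x = 0)
    (hgq : ∀ x ∈ ℋ q, g x ∈ ℋ q) (hg0 : ∀ n, n ≠ q → ∀ x ∈ ℋ n, g x = 0) :
    ∀ x ∈ ℋ (p + q),
      smashEnd k H f g x =
        (LinearMap.mul' k H ∘ₗ TensorProduct.map f g ∘ₗ Coalgebra.comul (R := k)) x := by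
  classical
  set m := LinearMap.mul' k H with hm
  set Δ := Coalgebra.comul (R := k) (A := H) with hΔ
  -- inner key lemma
  have inner : ∀ v ∈ ℋ q, ∀ y ∈ ℋ p,
      m (LinearMap.lTensor H g (LinearMap.lTensor H m (cyclicMap k H ((Δ y) ⊗ₜ[k] v))))
        = y * g v := by
    intro v hv y hy
    set Φ : H ⊗[k] H →ₗ[k] H := m ∘ₗ LinearMap.lTensor H g ∘ₗ LinearMap.lTensor H m ∘ₗ
        cyclicMap k H ∘ₗ ((TensorProduct.mk k (H ⊗[k] H) H).flip v) with hΦ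
    set Ψ : H ⊗[k] H →ₗ[k] H := (LinearMap.mulRight k (g v)) ∘ₗ GradedAlgebra.proj ℋ p ∘ₗ
        (TensorProduct.lid k H).toLinearMap ∘ₗ
        LinearMap.rTensor H (Coalgebra.counit (R := k) (A := H)) with hΨ
    have main : ∀ (a b : ℕ), a + b = p → ∀ w ∈ ℋ a, ∀ w' ∈ ℋ b,
        Φ (w ⊗ₜ[k] w') = Ψ (w ⊗ₜ[k] w') := by
      intro a b hab w hw w' hw'
      have hΦval : Φ (w ⊗ₜ[k] w') = w' * g (v * w) := by
        simp [hΦ, hm, cyclicMap_tmul, LinearMap.mul'_apply]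
      have hΨval : Ψ (w ⊗ₜ[k] w') =
          (Coalgebra.counit (R := k) w) • GradedAlgebra.proj ℋ p w' * g v := by
        simp [hΨ, LinearMap.mulRight_apply, TensorProduct.lid_tmul, map_smul,
          smul_mul_assoc]
      rw [hΦval, hΨval]
      rcases Nat.eq_zero_or_pos a with ha | ha
      · -- a = 0 : w is a scalar
        subst ha
        have hw1 : w ∈ (1 : Submodule k H) := by rw [← hconn]; exact hw
        obtain ⟨c, hc⟩ := Submodule.mem_one.mp hw1
        have hb : b = p := by omega
        rw [hb] at hw'
        have hproj : GradedAlgebra.proj ℋ p w' = w' := by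
          rw [GradedAlgebra.proj_apply, DirectSum.decompose_of_mem_same ℋ hw']
        rw [hproj, ← hc]
        rw [Bialgebra.counit_algebraMap]
        have : v * algebraMap k H c = c • v := by
          rw [← Algebra.commutes, Algebra.smul_def]
        rw [this, map_smul, mul_smul_comm, smul_mul_assoc]
      · -- a > 0 : g kills v * w, and proj kills w'
        have hg : g (v * w) = 0 :=
          hg0 (q + a) (by omega) _ (SetLike.mul_mem_graded hv hw)
        have hproj : GradedAlgebra.proj ℋ p w' = 0 := by
          rw [GradedAlgebra.proj_apply,
            DirectSum.decompose_of_mem_ne ℋ hw' (show b ≠ p by omega)]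
        rw [hg, hproj, mul_zero, smul_zero, zero_mul]
    have key : Φ (Δ y) = Ψ (Δ y) := by
      have hle : (⨆ pq : {pq : ℕ × ℕ // pq.1 + pq.2 = p},
          LinearMap.range (TensorProduct.mapIncl (ℋ pq.1.1) (ℋ pq.1.2)))
          ≤ LinearMap.eqLocus Φ Ψ := by
        apply iSup_le
        rintro ⟨⟨a, b⟩, hab⟩ _ ⟨t, rfl⟩
        induction t with
        | zero => simp only [map_zero]; exact zero_mem _
        | add s t hs ht => rw [map_add]; exact add_mem hs ht
        | tmul w w' =>
          rw [LinearMap.mem_eqLocus]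
          simp only [TensorProduct.mapIncl, TensorProduct.map_tmul, Submodule.coe_subtype]
          exact main a b hab _ w.2 _ w'.2
      exact hle (hcomul p y hy)
    have hΦΔ : Φ (Δ y) =
        m (LinearMap.lTensor H g (LinearMap.lTensor H m (cyclicMap k H ((Δ y) ⊗ₜ[k] v)))) := by
      simp [hΦ]
    have hΨΔ : Ψ (Δ y) = y * g v := by
      have h1 : LinearMap.rTensor H (Coalgebra.counit (R := k) (A := H)) (Δ y)
          = (1 : k) ⊗ₜ[k] y := Coalgebra.rTensor_counit_comul y
      simp [hΨ, h1, GradedAlgebra.proj_apply, DirectSum.decompose_of_mem_same ℋ hy]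
    rw [← hΦΔ, key, hΨΔ]
  -- outer argument
  intro x hx
  set M₁ : H ⊗[k] H →ₗ[k] H := m ∘ₗ LinearMap.lTensor H g ∘ₗ LinearMap.lTensor H m ∘ₗ
      cyclicMap k H ∘ₗ LinearMap.rTensor H (Δ ∘ₗ f) with hM₁
  set M₂ : H ⊗[k] H →ₗ[k] H := m ∘ₗ TensorProduct.map f g with hM₂
  have hgoal : smashEnd k H f g x = M₁ (Δ x) := by
    simp [smashEnd, smashOf, hM₁, hm, hΔ]
  have hrhs : (LinearMap.mul' k H ∘ₗ TensorProduct.map f g ∘ₗ Coalgebra.comul (R := k)) x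
      = M₂ (Δ x) := by simp [hM₂, hm, hΔ]
  rw [hgoal, hrhs]
  have main : ∀ (i j : ℕ), i + j = p + q → ∀ u ∈ ℋ i, ∀ v ∈ ℋ j,
      M₁ (u ⊗ₜ[k] v) = M₂ (u ⊗ₜ[k] v) := by
    intro i j hij u hu v hv
    have hM₁val : M₁ (u ⊗ₜ[k] v) =
        m (LinearMap.lTensor H g (LinearMap.lTensor H m
          (cyclicMap k H ((Δ (f u)) ⊗ₜ[k] v)))) := by
      simp [hM₁]
    have hM₂val : M₂ (u ⊗ₜ[k] v) = f u * g v := by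
      simp [hM₂, hm, LinearMap.mul'_apply]
    rw [hM₁val, hM₂val]
    by_cases hi : i = p
    · subst hi
      have hj : j = q := by omega
      rw [hj] at hv
      exact inner v hv (f u) (hfp _ hu)
    · have hf : f u = 0 := hf0 i hi _ hu
      rw [hf, map_zero, zero_tmul, map_zero, map_zero, map_zero, map_zero, zero_mul]
  have hle : (⨆ pq : {pq : ℕ × ℕ // pq.1 + pq.2 = p + q},
      LinearMap.range (TensorProduct.mapIncl (ℋ pq.1.1) (ℋ pq.1.2)))
      ≤ LinearMap.eqLocus M₁ M₂ := by
    apply iSup_le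
    rintro ⟨⟨i, j⟩, hij⟩ _ ⟨t, rfl⟩
    induction t with
    | zero => simp only [map_zero]; exact zero_mem _
    | add s t hs ht => rw [map_add]; exact add_mem hs ht
    | tmul u v =>
      rw [LinearMap.mem_eqLocus]
      simp only [TensorProduct.mapIncl, TensorProduct.map_tmul, Submodule.coe_subtype]
      exact main i j hij _ u.2 _ v.2
  exact hle (hcomul (p + q) x hx)
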